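/- Let n ≥ 1, let ε_1,…,ε_n > 0, set B = Σ_{i=1}^n 1/(1+e^{ε_i}) and assume n − 2B ≠ 0. Let c ∈ [0,1] and let x_1,…,x_n be i.i.d. Bernoulli(c) random variables. Independently of the x's, for each i let y_i be Bernoulli with success probability e^{ε_i}/(1+e^{ε_i}) conditionally on x_i = 1 and success probability 1/(1+e^{ε_i}) conditionally on x_i = 0, with y_1,…,y_n conditionally independent given the x's. Let A = Σ_{i=1}^n y_i and z = (A − B)/(n − 2B). Then E[z] = c. -/

import Mathlib

open MeasureTheory ProbabilityTheory

noncomputable section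

/-- Joint law of a pair `(x, y)` where `x ~ Bernoulli(c)` and, conditionally on `x`,
`y` is Bernoulli with success probability `e/(1+e)` if `x = 1` and `1/(1+e)` if `x = 0`
(here `e = e^ε`). -/
def pairLaw (c e : ℝ) : Measure (Bool × Bool) :=
  ENNReal.ofReal (c * (e / (1 + e))) • Measure.dirac (true, true) +
    ENNReal.ofReal (c * (1 / (1 + e))) • Measure.dirac (true, false) +
    ENNReal.ofReal ((1 - c) * (1 / (1 + e))) • Measure.dirac (false, true) +
    ENNReal.ofReal ((1 - c) * (e / (1 + e))) • Measure.dirac (false, false)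

lemma pairLaw_singleton (c e : ℝ) (p : Bool × Bool) :
    pairLaw c e {p} =
      ENNReal.ofReal (c * (e / (1 + e))) * Set.indicator {p} 1 (true, true) +
      ENNReal.ofReal (c * (1 / (1 + e))) * Set.indicator {p} 1 (true, false) +
      ENNReal.ofReal ((1 - c) * (1 / (1 + e))) * Set.indicator {p} 1 (false, true) +
      ENNReal.ofReal ((1 - c) * (e / (1 + e))) * Set.indicator {p} 1 (false, false) := by
  simp [pairLaw, Measure.dirac_apply, smul_eq_mul]

lemma pairLaw_prob (c e : ℝ) (hc : c ∈ Set.Icc (0:ℝ) 1) (he : 0 < e) :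
    IsProbabilityMeasure (pairLaw c e) := by
  obtain ⟨hc0, hc1⟩ := hc
  have h1 : (0:ℝ) < 1 + e := by linarith
  have h2 : (0:ℝ) ≤ 1 - c := by linarith
  constructor
  simp only [pairLaw, Measure.add_apply, Measure.smul_apply,
    Measure.dirac_apply_of_mem (Set.mem_univ _), smul_eq_mul, mul_one]
  have hA : 0 ≤ c * (e / (1 + e)) := mul_nonneg hc0 (by positivity)
  have hA2 : 0 ≤ c * (1 / (1 + e)) := mul_nonneg hc0 (by positivity)
  have hA3 : 0 ≤ (1 - c) * (1 / (1 + e)) := mul_nonneg h2 (by positivity)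
  have hA4 : 0 ≤ (1 - c) * (e / (1 + e)) := mul_nonneg h2 (by positivity)
  rw [← ENNReal.ofReal_add hA hA2, ← ENNReal.ofReal_add (add_nonneg hA hA2) hA3,
    ← ENNReal.ofReal_add (add_nonneg (add_nonneg hA hA2) hA3) hA4]
  rw [show c * (e / (1 + e)) + c * (1 / (1 + e)) + (1 - c) * (1 / (1 + e)) +
      (1 - c) * (e / (1 + e)) = 1 by field_simp; ring]
  exact ENNReal.ofReal_one

lemma integral_pairLaw (c e : ℝ) (hc : c ∈ Set.Icc (0:ℝ) 1) (he : 0 < e)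
    (g : Bool × Bool → ℝ) :
    ∫ p, g p ∂(pairLaw c e) =
      c * (e / (1 + e)) * g (true, true) + c * (1 / (1 + e)) * g (true, false) +
      (1 - c) * (1 / (1 + e)) * g (false, true) +
      (1 - c) * (e / (1 + e)) * g (false, false) := by
  obtain ⟨hc0, hc1⟩ := hc
  have h1 : (0:ℝ) < 1 + e := by linarith
  have h2 : (0:ℝ) ≤ 1 - c := by linarith
  haveI := pairLaw_prob c e ⟨hc0, hc1⟩ he
  rw [integral_fintype Integrable.of_finite]
  simp only [Measure.real, Fintype.sum_prod_type, Fintype.sum_bool, pairLaw_singleton, smul_eq_mul]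
  simp only [Set.indicator_apply, Set.mem_singleton_iff, Prod.mk.injEq, Pi.one_apply]
  norm_num
  rw [ENNReal.toReal_ofReal (by positivity), ENNReal.toReal_ofReal (by positivity),
    ENNReal.toReal_ofReal (mul_nonneg h2 (by positivity)),
    ENNReal.toReal_ofReal (mul_nonneg h2 (by positivity))]
  ring

lemma pi_map_eval {ι : Type*} [Fintype ι] {α : ι → Type*} [∀ i, MeasurableSpace (α i)]
    (μ : ∀ i, Measure (α i)) [∀ i, IsProbabilityMeasure (μ i)] (i : ι) :
    (Measure.pi μ).map (Function.eval i) = μ i := by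
  classical
  ext s hs
  rw [Measure.map_apply (measurable_pi_apply i) hs, Set.eval_preimage, Measure.pi_pi]
  rw [Fintype.prod_eq_single i]
  · simp
  · intro j hj; simp [Function.update_of_ne hj]

/-- the randomized-response frequency estimator
`z = (A - B)/(n - 2B)` is unbiased: `E[z] = c`. -/
theorem statement_12 (n : ℕ) (hn : 1 ≤ n) (ε : ℕ → ℝ) (hε : ∀ i < n, 0 < ε i)
    (c : ℝ) (hc : c ∈ Set.Icc (0:ℝ) 1)
    (hB : (n : ℝ) - 2 * (∑ i ∈ Finset.range n, 1 / (1 + Real.exp (ε i))) ≠ 0) :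
    ∫ ω, ((∑ i : Fin n, if (ω i).2 then (1:ℝ) else 0) -
          ∑ i ∈ Finset.range n, 1 / (1 + Real.exp (ε i))) /
        ((n : ℝ) - 2 * ∑ i ∈ Finset.range n, 1 / (1 + Real.exp (ε i)))
      ∂(Measure.pi fun i : Fin n => pairLaw c (Real.exp (ε i.1))) = c := by
  have hprob : ∀ i : Fin n, IsProbabilityMeasure (pairLaw c (Real.exp (ε i.1))) :=
    fun i => pairLaw_prob c _ hc (Real.exp_pos _)
  haveI := hprob
  set μ : Measure (Fin n → Bool × Bool) :=
    Measure.pi fun i : Fin n => pairLaw c (Real.exp (ε i.1)) with hμ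
  haveI : IsProbabilityMeasure μ := by rw [hμ]; infer_instance
  set B : ℝ := ∑ i ∈ Finset.range n, 1 / (1 + Real.exp (ε i)) with hBdef
  -- expectation of each coordinate's y-indicator
  have hcoord : ∀ i : Fin n,
      ∫ ω, (if (ω i).2 then (1:ℝ) else 0) ∂μ =
        (c * Real.exp (ε i.1) + (1 - c)) / (1 + Real.exp (ε i.1)) := by
    intro i
    have hmeas : AEStronglyMeasurable (fun p : Bool × Bool => if p.2 then (1:ℝ) else 0)
        (μ.map (Function.eval i)) :=
      Measurable.aestronglyMeasurable (by measurability)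
    have hmap := integral_map (f := fun p : Bool × Bool => if p.2 then (1:ℝ) else 0)
      (φ := Function.eval i) (μ := μ) (measurable_pi_apply i).aemeasurable hmeas
    rw [hμ] at hmap
    rw [pi_map_eval (fun i : Fin n => pairLaw c (Real.exp (ε i.1))) i] at hmap
    rw [hμ, ← hmap, integral_pairLaw c _ hc (Real.exp_pos _)]
    have h1 : (0:ℝ) < 1 + Real.exp (ε i.1) := by positivity
    field_simp
    simp only [if_true, Bool.false_eq_true, if_false]
    ring
  have hint : ∀ i : Fin n, Integrable (fun ω => if (ω i).2 then (1:ℝ) else 0) μ :=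
    fun i => Integrable.of_finite
  have hsum : ∫ ω, (∑ i : Fin n, if (ω i).2 then (1:ℝ) else 0) ∂μ =
      ∑ i : Fin n, (c * Real.exp (ε i.1) + (1 - c)) / (1 + Real.exp (ε i.1)) := by
    rw [integral_finset_sum _ (fun i _ => hint i)]
    exact Finset.sum_congr rfl fun i _ => hcoord i
  rw [integral_div, integral_sub (integrable_finset_sum _ (fun i _ => hint i))
    (integrable_const _), integral_const, hsum]
  simp only [probReal_univ, measure_univ, ENNReal.toReal_one, smul_eq_mul, one_mul]
  -- algebra
  have hR : c * ((n : ℝ) - 2 * B) =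
      ∑ i : Fin n, c * (1 - 2 * (1 / (1 + Real.exp (ε i.1)))) := by
    rw [← Finset.mul_sum]
    congr 1
    rw [hBdef, ← Fin.sum_univ_eq_sum_range (fun i => 1 / (1 + Real.exp (ε i))) n,
      Finset.sum_sub_distrib]
    simp [Finset.mul_sum]
  have key : (∑ i : Fin n, (c * Real.exp (ε i.1) + (1 - c)) / (1 + Real.exp (ε i.1))) - B =
      c * ((n : ℝ) - 2 * B) := by
    rw [hR, hBdef, ← Fin.sum_univ_eq_sum_range (fun i => 1 / (1 + Real.exp (ε i))) n,
      ← Finset.sum_sub_distrib]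
    refine Finset.sum_congr rfl fun i _ => ?_
    have h1 : (0:ℝ) < 1 + Real.exp (ε i.1) := by positivity
    field_simp
    ring
  rw [key, mul_div_assoc, div_self hB, mul_one]

end
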